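/- Let E and F be compact convex subsets of a finite-dimensional real inner product space V. Suppose a compact group Γ ⊆ O(V) preserves both E and F, and F is an exposed face of E. Then the cone C_F = {u ∈ V : F = F_u(E)} contains a fixed point of Γ, i.e. there exists u with F = F_u(E) and g·u = u for all g ∈ Γ. -/

import Mathlib

/-- The exposed face of `E` defined by `u`. -/
def exposedFace {V : Type*} [NormedAddCommGroup V] [InnerProductSpace ℝ V]
    (E : Set V) (u : V) : Set V :=
  {x ∈ E | (inner ℝ x u : ℝ) = sSup ((fun y => (inner ℝ y u : ℝ)) '' E)}

open MeasureTheory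

/-- If a compact group `Γ` acts on `V` by orthogonal (linear isometric) transformations
preserving both a nonempty compact convex set `E` and an exposed face `F` of `E`, then
some vector exposing `F` is fixed by all of `Γ`. -/
theorem stmt_4 {V : Type*} [NormedAddCommGroup V] [InnerProductSpace ℝ V]
    [FiniteDimensional ℝ V]
    {Γ : Type*} [Group Γ] [TopologicalSpace Γ] [CompactSpace Γ] [IsTopologicalGroup Γ]
    (ρ : Γ →* (V ≃ₗᵢ[ℝ] V)) (hρcont : Continuous fun p : Γ × V => ρ p.1 p.2)
    (E F : Set V) (hEcomp : IsCompact E) (hEconv : Convex ℝ E) (hEne : E.Nonempty)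
    (hGE : ∀ g : Γ, (fun v => ρ g v) '' E = E)
    (hGF : ∀ g : Γ, (fun v => ρ g v) '' F = F)
    (hexp : ∃ u : V, F = exposedFace E u) :
    ∃ u : V, F = exposedFace E u ∧ ∀ g : Γ, ρ g u = u := by
  classical
  obtain ⟨u, hu⟩ := hexp
  letI : MeasurableSpace Γ := borel Γ
  haveI : BorelSpace Γ := ⟨rfl⟩
  letI : MeasurableSpace V := borel V
  haveI : BorelSpace V := ⟨rfl⟩
  -- basic continuity facts
  have cρ : ∀ x : V, Continuous fun g : Γ => ρ g x := fun x =>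
    hρcont.comp (continuous_id.prodMk continuous_const)
  have cρinv : ∀ x : V, Continuous fun g : Γ => ρ g⁻¹ x := fun x =>
    (cρ x).comp continuous_inv
  -- cancellation
  have hcancel : ∀ (g : Γ) (x : V), ρ g (ρ g⁻¹ x) = x := by
    intro g x
    have : (ρ g) ((ρ g⁻¹) x) = ((ρ g) * (ρ g⁻¹)) x := rfl
    rw [this, ← map_mul, mul_inv_cancel, map_one]
    rfl
  have hinner : ∀ (g : Γ) (x : V), (inner ℝ x (ρ g u) : ℝ) = inner ℝ (ρ g⁻¹ x) u := by
    intro g x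
    conv_lhs => rw [← hcancel g x]
    exact (ρ g).inner_map_map (ρ g⁻¹ x) u
  -- membership transport
  have hmemE : ∀ (g : Γ) {x : V}, x ∈ E → ρ g⁻¹ x ∈ E := by
    intro g x hx
    have := Set.mem_image_of_mem (fun v => ρ g⁻¹ v) hx
    rwa [hGE g⁻¹] at this
  have hmemF : ∀ (g : Γ) {x : V}, x ∈ F → ρ g⁻¹ x ∈ F := by
    intro g x hx
    have := Set.mem_image_of_mem (fun v => ρ g⁻¹ v) hx
    rwa [hGF g⁻¹] at this
  -- the support value h
  set h : ℝ := sSup ((fun y => (inner ℝ y u : ℝ)) '' E) with hh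
  have cinn : Continuous fun y : V => (inner ℝ y u : ℝ) := continuous_id.inner continuous_const
  have hBdd : BddAbove ((fun y => (inner ℝ y u : ℝ)) '' E) := (hEcomp.image cinn).bddAbove
  have hle : ∀ x ∈ E, (inner ℝ x u : ℝ) ≤ h := fun x hx =>
    le_csSup hBdd (Set.mem_image_of_mem _ hx)
  obtain ⟨x₀, hx₀E, hx₀max⟩ := hEcomp.exists_isMaxOn hEne cinn.continuousOn
  have hx₀ : (inner ℝ x₀ u : ℝ) = h := le_antisymm (hle _ hx₀E) (csSup_le
    (hEne.image _) (by rintro y ⟨z, hz, rfl⟩; exact hx₀max hz))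
  have hx₀F : x₀ ∈ F := by rw [hu]; exact ⟨hx₀E, hx₀⟩
  -- Haar measure
  set μ : Measure Γ := MeasureTheory.Measure.haar with hμ
  have hFinner : ∀ (g : Γ) {x : V}, x ∈ F → (inner ℝ (ρ g⁻¹ x) u : ℝ) = h := by
    intro g x hx
    have := hmemF g hx
    rw [hu] at this
    exact this.2
  -- the averaged vector
  set w : V := ∫ g, ρ g u ∂μ with hw
  have hφint : Integrable (fun g : Γ => ρ g u) μ :=
    (cρ u).integrable_of_hasCompactSupport (isClosed_tsupport _).isCompact
  have hinnw : ∀ x : V, (inner ℝ x w : ℝ) = ∫ g, (inner ℝ (ρ g⁻¹ x) u : ℝ) ∂μ := by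
    intro x
    rw [hw, ← integral_inner hφint x]
    exact integral_congr_ae (Filter.Eventually.of_forall fun g => hinner g x)
  set m : ℝ := (μ Set.univ).toReal with hm
  have hmpos : 0 < m := ENNReal.toReal_pos
    ((isOpen_univ.measure_pos μ Set.univ_nonempty).ne') (measure_ne_top μ _)
  have hFw : ∀ x ∈ F, (inner ℝ x w : ℝ) = m * h := by
    intro x hx
    rw [hinnw x]
    have : (fun g : Γ => (inner ℝ (ρ g⁻¹ x) u : ℝ)) = fun _ => h :=
      funext fun g => hFinner g hx
    rw [this, integral_const, smul_eq_mul, measureReal_def, ← hm]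
  have hcint : ∀ x : V, Continuous fun g : Γ => (inner ℝ (ρ g⁻¹ x) u : ℝ) := fun x =>
    (cρinv x).inner continuous_const
  have hint : ∀ x : V, Integrable (fun g : Γ => (inner ℝ (ρ g⁻¹ x) u : ℝ)) μ := fun x =>
    (hcint x).integrable_of_hasCompactSupport (isClosed_tsupport _).isCompact
  have hEw : ∀ x ∈ E, (inner ℝ x w : ℝ) ≤ m * h := by
    intro x hx
    rw [hinnw x]
    calc ∫ g, (inner ℝ (ρ g⁻¹ x) u : ℝ) ∂μ ≤ ∫ _, h ∂μ :=
          integral_mono (hint x) (integrable_const h) fun g => hle _ (hmemE g hx)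
      _ = m * h := by rw [integral_const, smul_eq_mul, measureReal_def, ← hm]
  -- sup for w
  have hgr : IsGreatest ((fun y => (inner ℝ y w : ℝ)) '' E) (m * h) := by
    constructor
    · exact ⟨x₀, (hu ▸ hx₀F : x₀ ∈ exposedFace E u).1, hFw x₀ hx₀F⟩
    · rintro y ⟨z, hz, rfl⟩; exact hEw z hz
  have hsupw : sSup ((fun y => (inner ℝ y w : ℝ)) '' E) = m * h := hgr.csSup_eq
  refine ⟨w, ?_, ?_⟩
  · -- F = exposedFace E w
    apply Set.eq_of_subset_of_subset
    · intro x hx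
      exact ⟨(hu ▸ hx : x ∈ exposedFace E u).1, by rw [hsupw]; exact hFw x hx⟩
    · intro x hx
      obtain ⟨hxE, hxw⟩ := hx
      rw [hsupw] at hxw
      -- the nonnegative function h - ⟨ρ g⁻¹ x, u⟩ has zero integral
      have hzero : ∫ g, (h - (inner ℝ (ρ g⁻¹ x) u : ℝ)) ∂μ = 0 := by
        rw [integral_sub (integrable_const h) (hint x), integral_const, smul_eq_mul, measureReal_def, ← hm,
          ← hinnw x, hxw, sub_self]
      have hnn : 0 ≤ fun g : Γ => (h - (inner ℝ (ρ g⁻¹ x) u : ℝ)) := fun g =>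
        sub_nonneg.2 (hle _ (hmemE g hxE))
      have hae : (fun g : Γ => (h - (inner ℝ (ρ g⁻¹ x) u : ℝ))) =ᵐ[μ] 0 :=
        (integral_eq_zero_iff_of_nonneg hnn
          ((integrable_const h).sub (hint x))).1 hzero
      have heq : (fun g : Γ => (h - (inner ℝ (ρ g⁻¹ x) u : ℝ))) = 0 :=
        (Continuous.ae_eq_iff_eq μ (continuous_const.sub (hcint x)) continuous_const).1 hae
      have h1 := congrFun heq 1
      simp only [Pi.zero_apply, sub_eq_zero, inv_one, map_one] at h1
      have h2 : ((1 : V ≃ₗᵢ[ℝ] V) x) = x := rfl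
      rw [h2] at h1
      rw [hu]
      exact ⟨hxE, by rw [← hh]; exact h1.symm⟩
  · -- fixed by Γ
    intro g
    have : ρ g w = ∫ g' : Γ, ρ g (ρ g' u) ∂μ :=
      ((ρ g).toLinearIsometry.integral_comp_comm (fun g' : Γ => ρ g' u)).symm
    rw [this]
    have : (fun g' : Γ => ρ g (ρ g' u)) = fun g' : Γ => ρ (g * g') u := by
      funext g'
      rw [map_mul]
      rfl
    rw [this]
    exact integral_mul_left_eq_self (fun g' : Γ => ρ g' u) g
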